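/- arXiv:1805.07618 — 3 statements merged into one kernel-verified Lean document; each statement's English description precedes it below -/
import Mathlib

section
/- Let ξ, d > 0 and define the Carleman weight φ_λ(z) = e^{−2λz}. There exist constants C̃ = C̃(ξ,d) > 0 and λ₀ = λ₀(ξ,d) > 1 such that for all λ ≥ λ₀ and all real-valued functions w ∈ H²(−ξ, d) with w(−ξ) = w'(−ξ) = 0, one has ∫_{−ξ}^d (w'')² φ_λ(z) dz ≥ C̃ ∫_{−ξ}^d (w'')² φ_λ(z) dz + C̃ λ ∫_{−ξ}^d (w')² φ_λ(z) dz + C̃ λ³ ∫_{−ξ}^d w² φ_λ(z) dz. -/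
open intervalIntegral

/-- Weighted Poincaré: if `f a = 0` then `λ² ∫ f² e^{-2λz} ≤ ∫ f'² e^{-2λz}`. -/
lemma carleman_key (a b lam : ℝ) (hab : a ≤ b) (hlam : 0 < lam)
    (f f' : ℝ → ℝ)
    (hf : ∀ z ∈ Set.Icc a b, HasDerivAt f (f' z) z)
    (hf' : ContinuousOn f' (Set.Icc a b))
    (hfa : f a = 0) :
    lam ^ 2 * (∫ z in a..b, (f z) ^ 2 * Real.exp (-2 * lam * z))
      ≤ ∫ z in a..b, (f' z) ^ 2 * Real.exp (-2 * lam * z) := by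
  have hIcc : Set.uIcc a b = Set.Icc a b := Set.uIcc_of_le hab
  have hfc : ContinuousOn f (Set.Icc a b) := fun z hz =>
    (hf z hz).continuousAt.continuousWithinAt
  have hexp : Continuous fun z : ℝ => Real.exp (-2 * lam * z) :=
    (Real.continuous_exp.comp (continuous_const.mul continuous_id))
  -- integrability
  have hI1 : IntervalIntegrable (fun z => (f z) ^ 2 * Real.exp (-2 * lam * z))
      MeasureTheory.volume a b := by
    apply ContinuousOn.intervalIntegrable
    rw [hIcc]
    exact (hfc.pow 2).mul hexp.continuousOn
  have hI2 : IntervalIntegrable (fun z => (f' z) ^ 2 * Real.exp (-2 * lam * z))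
      MeasureTheory.volume a b := by
    apply ContinuousOn.intervalIntegrable
    rw [hIcc]
    exact (hf'.pow 2).mul hexp.continuousOn
  have hI3 : IntervalIntegrable
      (fun z => (2 * f z * f' z - 2 * lam * (f z) ^ 2) * Real.exp (-2 * lam * z))
      MeasureTheory.volume a b := by
    apply ContinuousOn.intervalIntegrable
    rw [hIcc]
    exact (((continuousOn_const.mul hfc).mul hf').sub
      (continuousOn_const.mul (hfc.pow 2))).mul hexp.continuousOn
  -- FTC for g z = f z ^ 2 * exp (-2 λ z)
  have hftc : (∫ z in a..b,
      (2 * f z * f' z - 2 * lam * (f z) ^ 2) * Real.exp (-2 * lam * z))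
      = (f b) ^ 2 * Real.exp (-2 * lam * b) - (f a) ^ 2 * Real.exp (-2 * lam * a) := by
    apply intervalIntegral.integral_eq_sub_of_hasDerivAt
    · intro z hz
      rw [hIcc] at hz
      have h1 : HasDerivAt (fun z => (f z) ^ 2) (2 * f z * f' z) z := by
        have := (hf z hz).fun_pow 2
        simpa [mul_comm, mul_assoc, mul_left_comm] using this
      have h2 : HasDerivAt (fun z : ℝ => Real.exp (-2 * lam * z))
          (Real.exp (-2 * lam * z) * (-2 * lam)) z := by
        have := ((hasDerivAt_id z).const_mul (-2 * lam)).exp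
        simpa using this
      have := h1.fun_mul h2
      convert this using 1
      · rfl
      ring
    · rw [hIcc] at *
      exact hI3
  have hge : 0 ≤ ∫ z in a..b,
      (2 * f z * f' z - 2 * lam * (f z) ^ 2) * Real.exp (-2 * lam * z) := by
    rw [hftc, hfa]
    norm_num
    positivity
  -- pointwise AM-GM bound
  have hmono : (∫ z in a..b,
      (2 * f z * f' z - 2 * lam * (f z) ^ 2) * Real.exp (-2 * lam * z))
      ≤ ∫ z in a..b,
        ((1 / lam) * ((f' z) ^ 2 * Real.exp (-2 * lam * z))
          - lam * ((f z) ^ 2 * Real.exp (-2 * lam * z))) := by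
    apply intervalIntegral.integral_mono_on hab hI3
    · exact ((hI2.const_mul (1 / lam)).sub (hI1.const_mul lam))
    · intro z hz
      have he : 0 < Real.exp (-2 * lam * z) := Real.exp_pos _
      have key : 2 * f z * f' z - 2 * lam * (f z) ^ 2
          ≤ (1 / lam) * (f' z) ^ 2 - lam * (f z) ^ 2 := by
        rw [← sub_nonneg]
        have heq : (1 / lam) * (f' z) ^ 2 - lam * (f z) ^ 2
            - (2 * f z * f' z - 2 * lam * (f z) ^ 2)
            = (lam * f z - f' z) ^ 2 / lam := by
          field_simp
          ring
        rw [heq]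
        positivity
      nlinarith [key, he, mul_le_mul_of_nonneg_right key he.le]
  have h := hge.trans hmono
  rw [intervalIntegral.integral_sub (hI2.const_mul (1 / lam)) (hI1.const_mul lam),
    intervalIntegral.integral_const_mul, intervalIntegral.integral_const_mul] at h
  set I1 := ∫ z in a..b, (f z) ^ 2 * Real.exp (-2 * lam * z)
  set I2 := ∫ z in a..b, (f' z) ^ 2 * Real.exp (-2 * lam * z)
  have h3 : lam * I1 ≤ I2 / lam := by
    rw [div_eq_inv_mul, ← one_div]; linarith
  have h4 := (le_div_iff₀ hlam).mp h3
  nlinarith [h4]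

/-- 1D Carleman estimate (7.5): there exist `C̃ = C̃(ξ,d) > 0` and `λ₀ = λ₀(ξ,d) > 1`
such that for all `λ ≥ λ₀` and all real-valued `w ∈ H²(−ξ,d)` with
`w(−ξ) = w'(−ξ) = 0`,
`∫ (w'')² φ_λ ≥ C̃ ∫ (w'')² φ_λ + C̃ λ ∫ (w')² φ_λ + C̃ λ³ ∫ w² φ_λ`,
where `φ_λ(z) = e^{−2λz}`. -/
theorem carleman_1d (ξ d : ℝ) (hξ : 0 < ξ) (hd : 0 < d) :
    ∃ Ct > (0 : ℝ), ∃ lam₀ > (1 : ℝ), ∀ lam ≥ lam₀,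
      ∀ w w' w'' : ℝ → ℝ,
        (∀ z ∈ Set.Icc (-ξ) d, HasDerivAt w (w' z) z) →
        (∀ z ∈ Set.Icc (-ξ) d, HasDerivAt w' (w'' z) z) →
        ContinuousOn w'' (Set.Icc (-ξ) d) →
        w (-ξ) = 0 → w' (-ξ) = 0 →
        (∫ z in (-ξ)..d, (w'' z) ^ 2 * Real.exp (-2 * lam * z)) ≥
          Ct * (∫ z in (-ξ)..d, (w'' z) ^ 2 * Real.exp (-2 * lam * z))
          + Ct * lam * (∫ z in (-ξ)..d, (w' z) ^ 2 * Real.exp (-2 * lam * z))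
          + Ct * lam ^ 3 * (∫ z in (-ξ)..d, (w z) ^ 2 * Real.exp (-2 * lam * z)) := by
  refine ⟨1/4, by norm_num, 2, by norm_num, ?_⟩
  intro lam hlam w w' w'' hw hw' hw'' hw0 hw'0
  have hab : (-ξ : ℝ) ≤ d := by linarith
  have hlam0 : (0:ℝ) < lam := by linarith
  have hwc' : ContinuousOn w' (Set.Icc (-ξ) d) := fun z hz =>
    (hw' z hz).continuousAt.continuousWithinAt
  have h1 := carleman_key (-ξ) d lam hab hlam0 w w' hw hwc' hw0
  have h2 := carleman_key (-ξ) d lam hab hlam0 w' w'' hw' hw'' hw'0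
  set A := ∫ z in (-ξ)..d, (w'' z) ^ 2 * Real.exp (-2 * lam * z) with hA
  set B := ∫ z in (-ξ)..d, (w' z) ^ 2 * Real.exp (-2 * lam * z) with hB
  set C := ∫ z in (-ξ)..d, (w z) ^ 2 * Real.exp (-2 * lam * z) with hC
  have hCnn : 0 ≤ C := by
    rw [hC]
    apply intervalIntegral.integral_nonneg hab
    intro z _; positivity
  have hBnn : 0 ≤ B := by
    rw [hB]
    apply intervalIntegral.integral_nonneg hab
    intro z _; positivity
  have hAnn : 0 ≤ A := by
    rw [hA]
    apply intervalIntegral.integral_nonneg hab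
    intro z _; positivity
  -- lam^2 * C ≤ B, lam^2 * B ≤ A, lam ≥ 2
  nlinarith [mul_le_mul_of_nonneg_left h1 hlam0.le,
    mul_le_mul_of_nonneg_left h2 hlam0.le,
    mul_nonneg hlam0.le hBnn, mul_nonneg hlam0.le hCnn,
    mul_le_mul_of_nonneg_right h2 hlam0.le, sq_nonneg (lam - 2)]
end

section
/- Let ξ, d, h > 0, N ∈ ℕ, and let φ_λ(z) = e^{−2λz}. Suppose the 1D Carleman estimate holds: there are C̃(ξ,d) > 0 and λ₀(ξ,d) > 1 with ∫_{−ξ}^d (w'')² φ_λ dz ≥ C̃[∫ (w'')² φ_λ dz + λ ∫ (w')² φ_λ dz + λ³ ∫ w² φ_λ dz] for all λ ≥ λ₀ and all w ∈ H²(−ξ,d) with w(−ξ) = w'(−ξ) = 0. Consider a family of functions u(j,s,·) ∈ H²(−ξ,d), 1 ≤ j,s ≤ N, each vanishing with its z-derivative at z = −ξ (and at grid boundary points), and the semidiscrete Laplacian Δʰu = u_zz + u_xxʰ + u_yyʰ, where u_xxʰ, u_yyʰ are the standard second-order central difference quotients in the grid indices with step h. Then there exist C = C(ξ,d,h) > 0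 and λ₁ = λ₁(ξ,d,h) ≥ λ₀ such that for all λ ≥ λ₁: Σ_{j,s} h² ∫_{−ξ}^d |Δʰu(j,s,z)|² φ_λ(z) dz ≥ C Σ_{j,s} h² ∫ |u_zz|² φ_λ dz + C λ Σ_{j,s} h² ∫ |u_z|² φ_λ dz + C λ³ Σ_{j,s} h² ∫ |u|² φ_λ dz. -/
open intervalIntegral

/-- The semidiscrete Laplacian `Δʰu = u_zz + u_xxʰ + u_yyʰ`, where `uzz` is the second
`z`-derivative and the `x,y` parts are second-order central difference quotients with step `h`. -/
noncomputable def discLap (h : ℝ) (u uzz : ℤ → ℤ → ℝ → ℂ) (j s : ℤ) (z : ℝ) : ℂ :=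
  uzz j s z
    + (u (j - 1) s z - 2 * u j s z + u (j + 1) s z) / (h : ℂ) ^ 2
    + (u j (s - 1) z - 2 * u j s z + u j (s + 1) z) / (h : ℂ) ^ 2

noncomputable def Jint (a b lam : ℝ) (f : ℝ → ℂ) : ℝ :=
  ∫ z in a..b, (‖f z‖) ^ 2 * Real.exp (-2 * lam * z)

noncomputable def JintR (a b lam : ℝ) (f : ℝ → ℝ) : ℝ :=
  ∫ z in a..b, (f z) ^ 2 * Real.exp (-2 * lam * z)

noncomputable def S2 (N : ℕ) (h : ℝ) (F : ℤ → ℤ → ℝ) : ℝ :=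
  ∑ j ∈ Finset.Icc (1:ℤ) (N:ℤ), ∑ s ∈ Finset.Icc (1:ℤ) (N:ℤ), h ^ 2 * F j s

lemma sq_abs_add_ge (a b : ℂ) :
    (1/2) * (‖a‖) ^ 2 - (‖b‖) ^ 2 ≤ (‖a + b‖) ^ 2 := by
  have h1 : ‖a‖ ≤ ‖a + b‖ + ‖b‖ := by
    calc ‖a‖ = ‖(a + b) + (-b)‖ := by rw [add_neg_cancel_right]
      _ ≤ ‖a + b‖ + ‖-b‖ := norm_add_le _ _
      _ = ‖a + b‖ + ‖b‖ := by rw [norm_neg]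
  nlinarith [norm_nonneg a, norm_nonneg b, norm_nonneg (a + b),
    sq_nonneg (‖a + b‖ - ‖b‖)]

lemma neighbor_bound (h : ℝ) (hh : 0 < h) (v1 v2 v3 v4 v0 : ℂ) :
    (‖(v1 - 2*v0 + v2) / (h:ℂ)^2 + (v3 - 2*v0 + v4) / (h:ℂ)^2‖) ^ 2 ≤
      (20 / h^4) * ((‖v1‖)^2 + (‖v2‖)^2 + (‖v3‖)^2
        + (‖v4‖)^2 + (‖v0‖)^2) := by
  have habs : ‖(v1 - 2*v0 + v2) / (h:ℂ)^2 + (v3 - 2*v0 + v4) / (h:ℂ)^2‖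
      = ‖v1 + v2 + v3 + v4 - 4*v0‖ / h^2 := by
    rw [show (v1 - 2*v0 + v2) / (h:ℂ)^2 + (v3 - 2*v0 + v4) / (h:ℂ)^2
        = (v1 + v2 + v3 + v4 - 4*v0) / (h:ℂ)^2 by ring]
    rw [norm_div]
    congr 1
    rw [norm_pow, Complex.norm_real, Real.norm_eq_abs, abs_of_pos hh]
  rw [habs]
  have e4 : ‖4*v0‖ = 4 * ‖v0‖ := by
    rw [norm_mul]; norm_num
  have h2 : ‖v1 + v2 + v3 + v4 - 4*v0‖ ≤ ‖v1‖ + ‖v2‖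
      + ‖v3‖ + ‖v4‖ + 4 * ‖v0‖ := by
    calc ‖v1 + v2 + v3 + v4 - 4*v0‖
        = ‖(v1 + v2 + v3 + v4) + (-(4*v0))‖ := by rw [sub_eq_add_neg]
      _ ≤ ‖v1 + v2 + v3 + v4‖ + ‖-(4*v0)‖ := norm_add_le _ _
      _ = ‖v1 + v2 + v3 + v4‖ + 4 * ‖v0‖ := by
          rw [norm_neg, e4]
      _ ≤ (‖v1 + v2 + v3‖ + ‖v4‖) + 4 * ‖v0‖ := by
          have := norm_add_le (v1 + v2 + v3) v4; linarith
      _ ≤ ((‖v1 + v2‖ + ‖v3‖) + ‖v4‖) + 4 * ‖v0‖ := by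
          have := norm_add_le (v1 + v2) v3; linarith
      _ ≤ ‖v1‖ + ‖v2‖ + ‖v3‖ + ‖v4‖
            + 4 * ‖v0‖ := by
          have := norm_add_le v1 v2; linarith
  have hh4 : (0:ℝ) < h^4 := by positivity
  rw [div_pow, show (h^2)^2 = h^4 by ring,
    show (20 / h^4) * ((‖v1‖)^2 + (‖v2‖)^2 + (‖v3‖)^2
        + (‖v4‖)^2 + (‖v0‖)^2)
      = (20 * ((‖v1‖)^2 + (‖v2‖)^2 + (‖v3‖)^2
        + (‖v4‖)^2 + (‖v0‖)^2)) / h^4 by ring,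
    div_le_div_iff_of_pos_right hh4]
  set X := ‖v1 + v2 + v3 + v4 - 4*v0‖
  have hX : 0 ≤ X := norm_nonneg _
  have a1 := norm_nonneg v1
  have a2 := norm_nonneg v2
  have a3 := norm_nonneg v3
  have a4 := norm_nonneg v4
  have a0 := norm_nonneg v0
  nlinarith [sq_nonneg (‖v1‖ - ‖v2‖),
    sq_nonneg (‖v1‖ - ‖v3‖), sq_nonneg (‖v1‖ - ‖v4‖),
    sq_nonneg (‖v2‖ - ‖v3‖), sq_nonneg (‖v2‖ - ‖v4‖),
    sq_nonneg (‖v3‖ - ‖v4‖),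
    sq_nonneg (‖v0‖ - 4 * ‖v1‖),
    sq_nonneg (‖v0‖ - 4 * ‖v2‖),
    sq_nonneg (‖v0‖ - 4 * ‖v3‖),
    sq_nonneg (‖v0‖ - 4 * ‖v4‖),
    mul_le_mul h2 h2 hX (by linarith : (0:ℝ) ≤ ‖v1‖ + ‖v2‖ + ‖v3‖
      + ‖v4‖ + 4 * ‖v0‖)]

lemma sum_shift_le {M k : ℤ} {g : ℤ → ℝ} (hg : ∀ j, 0 ≤ g j)
    (h0 : ∀ j, j ∉ Finset.Icc (1:ℤ) M → g j = 0) :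
    ∑ j ∈ Finset.Icc (1:ℤ) M, g (j + k) ≤ ∑ j ∈ Finset.Icc (1:ℤ) M, g j := by
  classical
  have h1 : ∑ j ∈ Finset.Icc (1:ℤ) M, g (j + k) = ∑ j ∈ Finset.Icc (1+k) (M+k), g j := by
    rw [← Finset.map_add_right_Icc, Finset.sum_map]; rfl
  rw [h1, ← Finset.sum_filter_of_ne (p := fun j => j ∈ Finset.Icc (1:ℤ) M)
    (fun x _ hx => by by_contra hmem; exact hx (h0 x hmem))]
  apply Finset.sum_le_sum_of_subset_of_nonneg
  · intro x hx; exact (Finset.mem_filter.mp hx).2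
  · intro i _ _; exact hg i

lemma expCont (lam : ℝ) : Continuous (fun z : ℝ => Real.exp (-2 * lam * z)) := by fun_prop

lemma intCC {a b lam : ℝ} {f : ℝ → ℂ} (hf : Continuous f) :
    IntervalIntegrable (fun z => (‖f z‖) ^ 2 * Real.exp (-2 * lam * z))
      MeasureTheory.volume a b :=
  (((continuous_norm.comp hf).pow 2).mul (expCont lam)).intervalIntegrable a b

lemma intCR {a b lam : ℝ} {f : ℝ → ℝ} (hf : Continuous f) :
    IntervalIntegrable (fun z => (f z) ^ 2 * Real.exp (-2 * lam * z))
      MeasureTheory.volume a b :=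
  ((hf.pow 2).mul (expCont lam)).intervalIntegrable a b

lemma Jint_nonneg (a b lam : ℝ) (hab : a ≤ b) (f : ℝ → ℂ) : 0 ≤ Jint a b lam f := by
  apply intervalIntegral.integral_nonneg hab
  intro z _; positivity

lemma Jint_zero (a b lam : ℝ) (f : ℝ → ℂ) (hf : ∀ z, f z = 0) : Jint a b lam f = 0 := by
  unfold Jint; simp [hf]

lemma Jint_split (a b lam : ℝ) (f : ℝ → ℂ) (hf : Continuous f) :
    Jint a b lam f = JintR a b lam (fun z => (f z).re) + JintR a b lam (fun z => (f z).im) := by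
  unfold Jint JintR
  rw [← intervalIntegral.integral_add (intCR (f := fun z => (f z).re) (Complex.continuous_re.comp hf))
    (intCR (f := fun z => (f z).im) (Complex.continuous_im.comp hf))]
  apply intervalIntegral.integral_congr
  intro z _
  simp only [Function.comp]
  rw [Complex.sq_norm, Complex.normSq_apply]
  ring

lemma integral_lin_comb {a b : ℝ} (c K : ℝ) {A S1 S2 S3 S4 S5 : ℝ → ℝ}
    (hA : IntervalIntegrable A MeasureTheory.volume a b)
    (h1 : IntervalIntegrable S1 MeasureTheory.volume a b)
    (h2 : IntervalIntegrable S2 MeasureTheory.volume a b)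
    (h3 : IntervalIntegrable S3 MeasureTheory.volume a b)
    (h4 : IntervalIntegrable S4 MeasureTheory.volume a b)
    (h5 : IntervalIntegrable S5 MeasureTheory.volume a b) :
    (∫ z in a..b, (c * A z - K * (S1 z + S2 z + S3 z + S4 z + S5 z))) =
      c * (∫ z in a..b, A z) - K * ((∫ z in a..b, S1 z) + (∫ z in a..b, S2 z)
        + (∫ z in a..b, S3 z) + (∫ z in a..b, S4 z) + (∫ z in a..b, S5 z)) := by
  have hS : IntervalIntegrable (fun z => S1 z + S2 z + S3 z + S4 z + S5 z)
      MeasureTheory.volume a b := (((h1.add h2).add h3).add h4).add h5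
  rw [intervalIntegral.integral_sub (hA.const_mul c) (hS.const_mul K),
    intervalIntegral.integral_const_mul, intervalIntegral.integral_const_mul,
    intervalIntegral.integral_add (((h1.add h2).add h3).add h4) h5,
    intervalIntegral.integral_add ((h1.add h2).add h3) h4,
    intervalIntegral.integral_add (h1.add h2) h3,
    intervalIntegral.integral_add h1 h2]

lemma S2_nonneg (N : ℕ) (h : ℝ) (F : ℤ → ℤ → ℝ) (hF : ∀ j s, 0 ≤ F j s) : 0 ≤ S2 N h F := by
  apply Finset.sum_nonneg; intro j _
  apply Finset.sum_nonneg; intro s _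
  exact mul_nonneg (sq_nonneg h) (hF j s)

lemma S2_mono (N : ℕ) (h : ℝ) (F G : ℤ → ℤ → ℝ) (hFG : ∀ j s, F j s ≤ G j s) :
    S2 N h F ≤ S2 N h G := by
  apply Finset.sum_le_sum; intro j _
  apply Finset.sum_le_sum; intro s _
  exact mul_le_mul_of_nonneg_left (hFG j s) (sq_nonneg h)

lemma S2_smul (N : ℕ) (h c : ℝ) (F : ℤ → ℤ → ℝ) :
    S2 N h (fun j s => c * F j s) = c * S2 N h F := by
  unfold S2
  rw [Finset.mul_sum]
  apply Finset.sum_congr rfl; intro j _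
  rw [Finset.mul_sum]
  apply Finset.sum_congr rfl; intro s _
  ring

lemma S2_comb3 (N : ℕ) (h c1 c2 c3 : ℝ) (F G H : ℤ → ℤ → ℝ) :
    S2 N h (fun j s => c1 * F j s + c2 * G j s + c3 * H j s)
      = c1 * S2 N h F + c2 * S2 N h G + c3 * S2 N h H := by
  unfold S2
  simp only [Finset.mul_sum, ← Finset.sum_add_distrib]
  apply Finset.sum_congr rfl; intro j _
  apply Finset.sum_congr rfl; intro s _
  ring

lemma S2_comb6 (N : ℕ) (h K : ℝ) (L F1 F2 F3 F4 F5 : ℤ → ℤ → ℝ) :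
    S2 N h (fun j s => L j s + K * (F1 j s + F2 j s + F3 j s + F4 j s + F5 j s))
      = S2 N h L + K * (S2 N h F1 + S2 N h F2 + S2 N h F3 + S2 N h F4 + S2 N h F5) := by
  unfold S2
  simp only [Finset.mul_sum, mul_add, Finset.sum_add_distrib]
  ring

lemma S2_shift_j (N : ℕ) (h : ℝ) (k : ℤ) (F : ℤ → ℤ → ℝ) (hF : ∀ j s, 0 ≤ F j s)
    (h0 : ∀ j s, j ∉ Finset.Icc (1:ℤ) (N:ℤ) ∨ s ∉ Finset.Icc (1:ℤ) (N:ℤ) → F j s = 0) :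
    S2 N h (fun j s => F (j + k) s) ≤ S2 N h F := by
  unfold S2
  exact sum_shift_le (g := fun j => ∑ s ∈ Finset.Icc (1:ℤ) (N:ℤ), h ^ 2 * F j s)
    (fun j => Finset.sum_nonneg fun s _ => mul_nonneg (sq_nonneg h) (hF j s))
    (fun j hj => Finset.sum_eq_zero fun s _ => by rw [h0 j s (Or.inl hj), mul_zero])

lemma S2_shift_s (N : ℕ) (h : ℝ) (k : ℤ) (F : ℤ → ℤ → ℝ) (hF : ∀ j s, 0 ≤ F j s)
    (h0 : ∀ j s, j ∉ Finset.Icc (1:ℤ) (N:ℤ) ∨ s ∉ Finset.Icc (1:ℤ) (N:ℤ) → F j s = 0) :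
    S2 N h (fun j s => F j (s + k)) ≤ S2 N h F := by
  unfold S2
  apply Finset.sum_le_sum; intro j _
  exact sum_shift_le (g := fun s => h ^ 2 * F j s)
    (fun s => mul_nonneg (sq_nonneg h) (hF j s))
    (fun s hs => by show h ^ 2 * F j s = 0; rw [h0 j s (Or.inr hs), mul_zero])

/-- Semidiscrete Carleman estimate (Theorem 7.1): assuming the 1D Carleman estimate with
constants `C̃ > 0`, `λ₀ > 1`, there exist `C = C(ξ,d,h) > 0` and `λ₁ ≥ λ₀` such that for all
`λ ≥ λ₁` and all semidiscrete functions `u` vanishing at the grid boundary and with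
`u = u_z = 0` at `z = −ξ`:
`Σ h² ∫ |Δʰu|² φ_λ ≥ C Σ h² ∫ |u_zz|² φ_λ + C λ Σ h² ∫ |u_z|² φ_λ + C λ³ Σ h² ∫ |u|² φ_λ`. -/
theorem carleman_semidiscrete (ξ d h : ℝ) (N : ℕ) (hξ : 0 < ξ) (hd : 0 < d) (hh : 0 < h)
    (Ct lam₀ : ℝ) (hCt : 0 < Ct) (hlam₀ : 1 < lam₀)
    (h1d : ∀ lam ≥ lam₀, ∀ w w' w'' : ℝ → ℝ,
      (∀ z ∈ Set.Icc (-ξ) d, HasDerivAt w (w' z) z) →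
      (∀ z ∈ Set.Icc (-ξ) d, HasDerivAt w' (w'' z) z) →
      ContinuousOn w'' (Set.Icc (-ξ) d) →
      w (-ξ) = 0 → w' (-ξ) = 0 →
      (∫ z in (-ξ)..d, (w'' z) ^ 2 * Real.exp (-2 * lam * z)) ≥
        Ct * (∫ z in (-ξ)..d, (w'' z) ^ 2 * Real.exp (-2 * lam * z))
        + Ct * lam * (∫ z in (-ξ)..d, (w' z) ^ 2 * Real.exp (-2 * lam * z))
        + Ct * lam ^ 3 * (∫ z in (-ξ)..d, (w z) ^ 2 * Real.exp (-2 * lam * z))) :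
    ∃ C > (0 : ℝ), ∃ lam₁ ≥ lam₀, ∀ lam ≥ lam₁,
      ∀ u uz uzz : ℤ → ℤ → ℝ → ℂ,
        (∀ j s z, HasDerivAt (u j s) (uz j s z) z) →
        (∀ j s z, HasDerivAt (uz j s) (uzz j s z) z) →
        (∀ j s, Continuous (uzz j s)) →
        (∀ j s z, (j ∉ Finset.Icc (1 : ℤ) (N : ℤ) ∨ s ∉ Finset.Icc (1 : ℤ) (N : ℤ)) →
          u j s z = 0) →
        (∀ j s, u j s (-ξ) = 0) → (∀ j s, uz j s (-ξ) = 0) →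
        (∑ j ∈ Finset.Icc (1 : ℤ) (N : ℤ), ∑ s ∈ Finset.Icc (1 : ℤ) (N : ℤ),
            h ^ 2 * ∫ z in (-ξ)..d,
              (‖discLap h u uzz j s z‖) ^ 2 * Real.exp (-2 * lam * z)) ≥
          C * (∑ j ∈ Finset.Icc (1 : ℤ) (N : ℤ), ∑ s ∈ Finset.Icc (1 : ℤ) (N : ℤ),
              h ^ 2 * ∫ z in (-ξ)..d,
                (‖uzz j s z‖) ^ 2 * Real.exp (-2 * lam * z))
          + C * lam * (∑ j ∈ Finset.Icc (1 : ℤ) (N : ℤ), ∑ s ∈ Finset.Icc (1 : ℤ) (N : ℤ),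
              h ^ 2 * ∫ z in (-ξ)..d,
                (‖uz j s z‖) ^ 2 * Real.exp (-2 * lam * z))
          + C * lam ^ 3 * (∑ j ∈ Finset.Icc (1 : ℤ) (N : ℤ), ∑ s ∈ Finset.Icc (1 : ℤ) (N : ℤ),
              h ^ 2 * ∫ z in (-ξ)..d,
                (‖u j s z‖) ^ 2 * Real.exp (-2 * lam * z)) := by
  refine ⟨Ct/4, by positivity, max lam₀ (20*(20/h^4)/Ct + 1), le_max_left _ _, ?_⟩
  intro lam hlam u uz uzz hu huz huzzc hbox hu0 huz0
  have hlam0 : lam₀ ≤ lam := le_trans (le_max_left _ _) hlam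
  have hlam1 : (1:ℝ) ≤ lam := by linarith
  have hKlam : 20*(20/h^4)/Ct + 1 ≤ lam := le_trans (le_max_right _ _) hlam
  have hab : (-ξ) ≤ d := by linarith
  have hu_c : ∀ j s, Continuous (u j s) := fun j s =>
    Differentiable.continuous (fun z => (hu j s z).differentiableAt)
  have huz_c : ∀ j s, Continuous (uz j s) := fun j s =>
    Differentiable.continuous (fun z => (huz j s z).differentiableAt)
  have hdisc_c : ∀ j s, Continuous (fun z => discLap h u uzz j s z) := by
    intro j s
    unfold discLap
    exact ((huzzc j s).add ((((hu_c (j-1) s).sub (continuous_const.mul (hu_c j s))).add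
        (hu_c (j+1) s)).div_const _)).add
      ((((hu_c j (s-1)).sub (continuous_const.mul (hu_c j s))).add (hu_c j (s+1))).div_const _)
  -- Step A: 1D Carleman applied to real and imaginary parts
  have hA : ∀ j s : ℤ, Ct * Jint (-ξ) d lam (uzz j s) + Ct * lam * Jint (-ξ) d lam (uz j s)
      + Ct * lam ^ 3 * Jint (-ξ) d lam (u j s) ≤ Jint (-ξ) d lam (uzz j s) := by
    intro j s
    have dre1 : ∀ z ∈ Set.Icc (-ξ) d, HasDerivAt (fun t => (u j s t).re) ((uz j s z).re) z :=
      fun z _ => Complex.reCLM.hasFDerivAt.comp_hasDerivAt z (hu j s z)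
    have dre2 : ∀ z ∈ Set.Icc (-ξ) d, HasDerivAt (fun t => (uz j s t).re) ((uzz j s z).re) z :=
      fun z _ => Complex.reCLM.hasFDerivAt.comp_hasDerivAt z (huz j s z)
    have dim1 : ∀ z ∈ Set.Icc (-ξ) d, HasDerivAt (fun t => (u j s t).im) ((uz j s z).im) z :=
      fun z _ => Complex.imCLM.hasFDerivAt.comp_hasDerivAt z (hu j s z)
    have dim2 : ∀ z ∈ Set.Icc (-ξ) d, HasDerivAt (fun t => (uz j s t).im) ((uzz j s z).im) z :=
      fun z _ => Complex.imCLM.hasFDerivAt.comp_hasDerivAt z (huz j s z)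
    have hre : Ct * JintR (-ξ) d lam (fun t => (uzz j s t).re)
        + Ct * lam * JintR (-ξ) d lam (fun t => (uz j s t).re)
        + Ct * lam ^ 3 * JintR (-ξ) d lam (fun t => (u j s t).re)
        ≤ JintR (-ξ) d lam (fun t => (uzz j s t).re) :=
      h1d lam hlam0 (fun t => (u j s t).re) (fun t => (uz j s t).re)
        (fun t => (uzz j s t).re) dre1 dre2
        ((Complex.continuous_re.comp (huzzc j s)).continuousOn)
        (by simp [hu0 j s]) (by simp [huz0 j s])
    have him : Ct * JintR (-ξ) d lam (fun t => (uzz j s t).im)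
        + Ct * lam * JintR (-ξ) d lam (fun t => (uz j s t).im)
        + Ct * lam ^ 3 * JintR (-ξ) d lam (fun t => (u j s t).im)
        ≤ JintR (-ξ) d lam (fun t => (uzz j s t).im) :=
      h1d lam hlam0 (fun t => (u j s t).im) (fun t => (uz j s t).im)
        (fun t => (uzz j s t).im) dim1 dim2
        ((Complex.continuous_im.comp (huzzc j s)).continuousOn)
        (by simp [hu0 j s]) (by simp [huz0 j s])
    rw [Jint_split (-ξ) d lam (uzz j s) (huzzc j s), Jint_split (-ξ) d lam (uz j s) (huz_c j s),
      Jint_split (-ξ) d lam (u j s) (hu_c j s)]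
    linarith
  -- Step B: lower bound for the discrete Laplacian term
  have hB : ∀ j s : ℤ, (1/2) * Jint (-ξ) d lam (uzz j s)
      - (20/h^4) * (Jint (-ξ) d lam (u (j-1) s) + Jint (-ξ) d lam (u (j+1) s)
        + Jint (-ξ) d lam (u j (s-1)) + Jint (-ξ) d lam (u j (s+1)) + Jint (-ξ) d lam (u j s))
      ≤ Jint (-ξ) d lam (fun z => discLap h u uzz j s z) := by
    intro j s
    have key : ∀ z ∈ Set.Icc (-ξ) d,
        ((1/2) * ((‖uzz j s z‖)^2 * Real.exp (-2 * lam * z))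
          - (20/h^4) * ((‖u (j-1) s z‖)^2 * Real.exp (-2 * lam * z)
            + (‖u (j+1) s z‖)^2 * Real.exp (-2 * lam * z)
            + (‖u j (s-1) z‖)^2 * Real.exp (-2 * lam * z)
            + (‖u j (s+1) z‖)^2 * Real.exp (-2 * lam * z)
            + (‖u j s z‖)^2 * Real.exp (-2 * lam * z)))
        ≤ (‖discLap h u uzz j s z‖)^2 * Real.exp (-2 * lam * z) := by
      intro z _
      have e : discLap h u uzz j s z = uzz j s z
          + ((u (j-1) s z - 2*u j s z + u (j+1) s z)/(h:ℂ)^2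
            + (u j (s-1) z - 2*u j s z + u j (s+1) z)/(h:ℂ)^2) := by
        unfold discLap; ring
      rw [e]
      have t1 := sq_abs_add_ge (uzz j s z) ((u (j-1) s z - 2*u j s z + u (j+1) s z)/(h:ℂ)^2
            + (u j (s-1) z - 2*u j s z + u j (s+1) z)/(h:ℂ)^2)
      have t2 := neighbor_bound h hh (u (j-1) s z) (u (j+1) s z) (u j (s-1) z)
        (u j (s+1) z) (u j s z)
      have he : (0:ℝ) ≤ Real.exp (-2 * lam * z) := (Real.exp_pos _).le
      have ple : (1/2) * (‖uzz j s z‖)^2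
          - (20/h^4) * ((‖u (j-1) s z‖)^2 + (‖u (j+1) s z‖)^2
            + (‖u j (s-1) z‖)^2 + (‖u j (s+1) z‖)^2
            + (‖u j s z‖)^2)
          ≤ (‖uzz j s z + ((u (j-1) s z - 2*u j s z + u (j+1) s z)/(h:ℂ)^2
            + (u j (s-1) z - 2*u j s z + u j (s+1) z)/(h:ℂ)^2)‖)^2 := by linarith
      calc (1/2) * ((‖uzz j s z‖)^2 * Real.exp (-2 * lam * z))
          - (20/h^4) * ((‖u (j-1) s z‖)^2 * Real.exp (-2 * lam * z)
            + (‖u (j+1) s z‖)^2 * Real.exp (-2 * lam * z)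
            + (‖u j (s-1) z‖)^2 * Real.exp (-2 * lam * z)
            + (‖u j (s+1) z‖)^2 * Real.exp (-2 * lam * z)
            + (‖u j s z‖)^2 * Real.exp (-2 * lam * z))
          = ((1/2) * (‖uzz j s z‖)^2
            - (20/h^4) * ((‖u (j-1) s z‖)^2 + (‖u (j+1) s z‖)^2
              + (‖u j (s-1) z‖)^2 + (‖u j (s+1) z‖)^2
              + (‖u j s z‖)^2)) * Real.exp (-2 * lam * z) := by ring
        _ ≤ _ := mul_le_mul_of_nonneg_right ple he
    have I1 : IntervalIntegrable (fun z =>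
        (1/2) * ((‖uzz j s z‖)^2 * Real.exp (-2 * lam * z))
          - (20/h^4) * ((‖u (j-1) s z‖)^2 * Real.exp (-2 * lam * z)
            + (‖u (j+1) s z‖)^2 * Real.exp (-2 * lam * z)
            + (‖u j (s-1) z‖)^2 * Real.exp (-2 * lam * z)
            + (‖u j (s+1) z‖)^2 * Real.exp (-2 * lam * z)
            + (‖u j s z‖)^2 * Real.exp (-2 * lam * z)))
        MeasureTheory.volume (-ξ) d :=
      ((intCC (huzzc j s)).const_mul (1/2)).sub
        ((((((intCC (hu_c (j-1) s)).add (intCC (hu_c (j+1) s))).add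
          (intCC (hu_c j (s-1)))).add (intCC (hu_c j (s+1)))).add
            (intCC (hu_c j s))).const_mul (20/h^4))

    have mono := intervalIntegral.integral_mono_on hab I1 (intCC (hdisc_c j s)) key
    have lin := integral_lin_comb (a := -ξ) (b := d) (1/2) (20/h^4)
      (intCC (lam := lam) (huzzc j s)) (intCC (lam := lam) (hu_c (j-1) s))
      (intCC (lam := lam) (hu_c (j+1) s)) (intCC (lam := lam) (hu_c j (s-1)))
      (intCC (lam := lam) (hu_c j (s+1))) (intCC (lam := lam) (hu_c j s))
    calc (1/2) * Jint (-ξ) d lam (uzz j s)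
        - (20/h^4) * (Jint (-ξ) d lam (u (j-1) s) + Jint (-ξ) d lam (u (j+1) s)
          + Jint (-ξ) d lam (u j (s-1)) + Jint (-ξ) d lam (u j (s+1)) + Jint (-ξ) d lam (u j s))
        = ∫ z in (-ξ)..d, ((1/2) * ((‖uzz j s z‖)^2 * Real.exp (-2 * lam * z))
          - (20/h^4) * ((‖u (j-1) s z‖)^2 * Real.exp (-2 * lam * z)
            + (‖u (j+1) s z‖)^2 * Real.exp (-2 * lam * z)
            + (‖u j (s-1) z‖)^2 * Real.exp (-2 * lam * z)
            + (‖u j (s+1) z‖)^2 * Real.exp (-2 * lam * z)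
            + (‖u j s z‖)^2 * Real.exp (-2 * lam * z))) := lin.symm
      _ ≤ Jint (-ξ) d lam (fun z => discLap h u uzz j s z) := mono
  -- assemble
  change S2 N h (fun j s => Jint (-ξ) d lam (fun z => discLap h u uzz j s z))
      ≥ Ct/4 * S2 N h (fun j s => Jint (-ξ) d lam (uzz j s))
        + Ct/4 * lam * S2 N h (fun j s => Jint (-ξ) d lam (uz j s))
        + Ct/4 * lam ^ 3 * S2 N h (fun j s => Jint (-ξ) d lam (u j s))
  have hJu0 : ∀ j s : ℤ, (j ∉ Finset.Icc (1:ℤ) (N:ℤ) ∨ s ∉ Finset.Icc (1:ℤ) (N:ℤ)) →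
      Jint (-ξ) d lam (u j s) = 0 :=
    fun j s hjs => Jint_zero _ _ _ _ (fun z => hbox j s z hjs)
  have hJnn : ∀ f : ℝ → ℂ, 0 ≤ Jint (-ξ) d lam f := Jint_nonneg _ _ _ hab
  have hFnn : ∀ j s : ℤ, 0 ≤ Jint (-ξ) d lam (u j s) := fun j s => hJnn _
  have hSA : Ct * S2 N h (fun j s => Jint (-ξ) d lam (uzz j s))
      + Ct * lam * S2 N h (fun j s => Jint (-ξ) d lam (uz j s))
      + Ct * lam ^ 3 * S2 N h (fun j s => Jint (-ξ) d lam (u j s))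
      ≤ S2 N h (fun j s => Jint (-ξ) d lam (uzz j s)) := by
    rw [← S2_comb3]
    exact S2_mono _ _ _ _ (fun j s => hA j s)
  have hSB : (1/2) * S2 N h (fun j s => Jint (-ξ) d lam (uzz j s))
      ≤ S2 N h (fun j s => Jint (-ξ) d lam (fun z => discLap h u uzz j s z))
        + (20/h^4) * (S2 N h (fun j s => Jint (-ξ) d lam (u (j-1) s))
          + S2 N h (fun j s => Jint (-ξ) d lam (u (j+1) s))
          + S2 N h (fun j s => Jint (-ξ) d lam (u j (s-1)))
          + S2 N h (fun j s => Jint (-ξ) d lam (u j (s+1)))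
          + S2 N h (fun j s => Jint (-ξ) d lam (u j s))) := by
    rw [← S2_smul, ← S2_comb6]
    exact S2_mono _ _ _ _ (fun j s => by have := hB j s; linarith)
  have hT1 : S2 N h (fun j s => Jint (-ξ) d lam (u (j-1) s))
      ≤ S2 N h (fun j s => Jint (-ξ) d lam (u j s)) := by
    have := S2_shift_j N h (-1) (fun j s => Jint (-ξ) d lam (u j s)) hFnn hJu0
    simpa [sub_eq_add_neg] using this
  have hT2 : S2 N h (fun j s => Jint (-ξ) d lam (u (j+1) s))
      ≤ S2 N h (fun j s => Jint (-ξ) d lam (u j s)) :=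
    S2_shift_j N h 1 (fun j s => Jint (-ξ) d lam (u j s)) hFnn hJu0
  have hT3 : S2 N h (fun j s => Jint (-ξ) d lam (u j (s-1)))
      ≤ S2 N h (fun j s => Jint (-ξ) d lam (u j s)) := by
    have := S2_shift_s N h (-1) (fun j s => Jint (-ξ) d lam (u j s)) hFnn hJu0
    simpa [sub_eq_add_neg] using this
  have hT4 : S2 N h (fun j s => Jint (-ξ) d lam (u j (s+1)))
      ≤ S2 N h (fun j s => Jint (-ξ) d lam (u j s)) :=
    S2_shift_s N h 1 (fun j s => Jint (-ξ) d lam (u j s)) hFnn hJu0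
  have hSP : 0 ≤ S2 N h (fun j s => Jint (-ξ) d lam (u j s)) := S2_nonneg _ _ _ hFnn
  have hSQ : 0 ≤ S2 N h (fun j s => Jint (-ξ) d lam (uz j s)) :=
    S2_nonneg _ _ _ (fun j s => hJnn _)
  have hSR : 0 ≤ S2 N h (fun j s => Jint (-ξ) d lam (uzz j s)) :=
    S2_nonneg _ _ _ (fun j s => hJnn _)
  have hK : (0:ℝ) < 20/h^4 := by positivity
  have hcoef : 20*(20/h^4) ≤ Ct * lam ^ 3 := by
    have h1 : Ct * (20*(20/h^4)/Ct + 1) ≤ Ct * lam := mul_le_mul_of_nonneg_left hKlam hCt.le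
    have h2 : Ct * (20*(20/h^4)/Ct + 1) = 20*(20/h^4) + Ct := by field_simp
    have hl2 : 1 ≤ lam ^ 2 := by nlinarith
    have h3 : Ct * lam ≤ Ct * lam ^ 3 := by
      nlinarith [mul_nonneg (mul_nonneg hCt.le (by linarith : (0:ℝ) ≤ lam))
        (by linarith : (0:ℝ) ≤ lam ^ 2 - 1)]
    linarith
  have hT : (20/h^4) * (S2 N h (fun j s => Jint (-ξ) d lam (u (j-1) s))
        + S2 N h (fun j s => Jint (-ξ) d lam (u (j+1) s))
        + S2 N h (fun j s => Jint (-ξ) d lam (u j (s-1)))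
        + S2 N h (fun j s => Jint (-ξ) d lam (u j (s+1)))
        + S2 N h (fun j s => Jint (-ξ) d lam (u j s)))
      ≤ (20/h^4) * (5 * S2 N h (fun j s => Jint (-ξ) d lam (u j s))) :=
    mul_le_mul_of_nonneg_left (by linarith) hK.le
  have hq1 : 0 ≤ Ct * S2 N h (fun j s => Jint (-ξ) d lam (uzz j s)) := mul_nonneg hCt.le hSR
  have hq2 : 0 ≤ Ct * (lam * S2 N h (fun j s => Jint (-ξ) d lam (uz j s))) :=
    mul_nonneg hCt.le (mul_nonneg (by linarith) hSQ)
  have hq3 : 20*(20/h^4) * S2 N h (fun j s => Jint (-ξ) d lam (u j s))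
      ≤ Ct * lam ^ 3 * S2 N h (fun j s => Jint (-ξ) d lam (u j s)) :=
    mul_le_mul_of_nonneg_right hcoef hSP
  linarith
end

section
/- Under the hypotheses of the gradient projection convergence theorem, suppose additionally that p* ∈ B̄(R) satisfies J(p*) ≤ ε (for some ε ≥ 0) where J ≥ 0. Then ‖p* − p_min‖² ≤ ε/α, and consequently for every n ≥ 1: ‖p* − p_n‖ ≤ (ε/α)^{1/2} + θⁿ ‖p_min − p₀‖. -/
/-- Convergence estimates (4.7), (4.10) of Theorem 7.6 in abstract form: if `J ≥ 0` on the
ball, `J` is `α`-strongly convex there, `p*` satisfies `J(p*) ≤ ε`, the variational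
inequality `⟨J′(p_min), p* − p_min⟩ ≥ 0` holds, and the iterates converge linearly to
`p_min`, then `‖p* − p_min‖² ≤ ε/α` and
`‖p* − p_n‖ ≤ (ε/α)^{1/2} + θⁿ‖p_min − p₀‖` for all `n ≥ 1`. -/
theorem convergence_to_exact_solution
    {H : Type*} [NormedAddCommGroup H] [InnerProductSpace ℝ H] [CompleteSpace H]
    (R α θ ε : ℝ) (hR : 0 < R) (hα : 0 < α) (hθ : θ ∈ Set.Ioo (0 : ℝ) 1) (hε : 0 ≤ ε)
    (J : H → ℝ) (J' : H → H) (pmin pstar : H) (p : ℕ → H)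
    (hJnonneg : ∀ q ∈ Metric.closedBall (0 : H) R, 0 ≤ J q)
    (hconv : ∀ q ∈ Metric.closedBall (0 : H) R, ∀ r : H,
      q + r ∈ Metric.closedBall (0 : H) R →
      α * ‖r‖ ^ 2 ≤ J (q + r) - J q - (inner ℝ (J' q) r : ℝ))
    (hpmin : pmin ∈ Metric.closedBall (0 : H) R)
    (hpstar : pstar ∈ Metric.closedBall (0 : H) R)
    (hvar : 0 ≤ (inner ℝ (J' pmin) (pstar - pmin) : ℝ))
    (hJstar : J pstar ≤ ε)
    (hlin : ∀ n : ℕ, ‖pmin - p n‖ ≤ θ ^ n * ‖pmin - p 0‖) :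
    ‖pstar - pmin‖ ^ 2 ≤ ε / α ∧
    ∀ n : ℕ, 1 ≤ n → ‖pstar - p n‖ ≤ Real.sqrt (ε / α) + θ ^ n * ‖pmin - p 0‖ := by
  have key := hconv pmin hpmin (pstar - pmin) (by simpa using hpstar)
  have hJm := hJnonneg pmin hpmin
  have h1 : α * ‖pstar - pmin‖ ^ 2 ≤ ε := by
    have : J (pmin + (pstar - pmin)) = J pstar := by rw [add_sub_cancel]
    nlinarith [key, hvar, hJm, hJstar]
  have hmain : ‖pstar - pmin‖ ^ 2 ≤ ε / α := by
    rw [le_div_iff₀ hα]; linarith [h1]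
  refine ⟨hmain, fun n hn => ?_⟩
  have h2 : ‖pstar - pmin‖ ≤ Real.sqrt (ε / α) := by
    have := Real.sqrt_le_sqrt hmain
    rwa [Real.sqrt_sq (norm_nonneg _)] at this
  calc ‖pstar - p n‖ ≤ ‖pstar - pmin‖ + ‖pmin - p n‖ := norm_sub_le_norm_sub_add_norm_sub _ _ _
    _ ≤ Real.sqrt (ε / α) + θ ^ n * ‖pmin - p 0‖ := add_le_add h2 (hlin n)
end
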